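/- The composition s₂ ∘ s₃ has order three: (s₂ s₃)³ = id, i.e., at every point where all denominators occurring in the sixfold composition are nonzero, applying s₂, s₃ alternately three times each returns the original point. -/

import Mathlib

open Finset

noncomputable section

/-- A point `(ε, q, p, x) ∈ ℂ^{n+3} × ℂⁿ × ℂⁿ × ℂⁿ`, where `n = m + 2` (so `n ≥ 2`).
Indices are 0-based: `e ⟨j-1,_⟩` is the paper's `ε_j`, etc. -/
structure GPt (m : ℕ) where
  e : Fin (m + 5) → ℂ
  q : Fin (m + 2) → ℂ
  p : Fin (m + 2) → ℂ
  x : Fin (m + 2) → ℂ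

namespace GPt

variable {m : ℕ}

/-- `Q₁ = Σ_{l=1}^n q_l p_l + (1 − Σ_{l=1}^{n+3} ε_l)/2`. -/
def Q1 (P : GPt m) : ℂ := (∑ l, P.q l * P.p l) + (1 - ∑ j, P.e j) / 2

/-- `Q₂ = Σ_{j=1}^n q_j − 1`. -/
def Q2 (P : GPt m) : ℂ := (∑ j, P.q j) - 1

/-- The index of `ε_{j+3}` (paper numbering) for `j` indexing `q, p, x`. -/
def eIdx (j : Fin (m + 2)) : Fin (m + 5) := ⟨j.val + 3, by omega⟩

/-- The transformation `s₀`. -/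
def s0 (P : GPt m) : GPt m where
  e := fun j => if j = 0 then 1 - P.e 1 else if j = 1 then 1 - P.e 0 else P.e j
  q := fun j => P.p j * (P.q j * P.p j - P.e (eIdx j)) / (P.Q1 * (P.Q1 + P.e 2))
  p := fun j => -(P.Q1 * (P.Q1 + P.e 2)) / P.p j
  x := fun i => 1 / P.x i

/-- The transformation `s₁`. -/
def s1 (P : GPt m) : GPt m where
  e := fun j => P.e (Equiv.swap 0 1 j)
  q := fun j => P.q j / P.x j
  p := fun j => P.x j * P.p j
  x := fun i => 1 / P.x i

/-- The transformation `s₂`. -/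
def s2 (P : GPt m) : GPt m where
  e := fun j => P.e (Equiv.swap 1 2 j)
  q := fun j => P.q j / P.Q2
  p := fun j => (P.p j - P.Q1) * P.Q2
  x := fun i => P.x i / (P.x i - 1)

/-- The transformation `s₃`. -/
def s3 (P : GPt m) : GPt m where
  e := fun j => P.e (Equiv.swap 2 3 j)
  q := fun j => if j = 0 then 1 / P.q 0 else -P.q j / P.q 0
  p := fun j => if j = 0 then -(P.q 0 * P.Q1) else -(P.q 0 * P.p j)
  x := fun i => if i = 0 then 1 / P.x 0 else P.x i / P.x 0

/-- The transformation `s_k` for `4 ≤ k ≤ n+2`: `ε_k ↔ ε_{k+1}` together with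
`(q_{k-3}, p_{k-3}, x_{k-3}) ↔ (q_{k-2}, p_{k-2}, x_{k-2})` (paper numbering). -/
def sMid (k : ℕ) (h : 4 ≤ k ∧ k ≤ m + 4) (P : GPt m) : GPt m where
  e := fun j => P.e (Equiv.swap ⟨k - 1, by omega⟩ ⟨k, by omega⟩ j)
  q := fun j => P.q (Equiv.swap ⟨k - 4, by omega⟩ ⟨k - 3, by omega⟩ j)
  p := fun j => P.p (Equiv.swap ⟨k - 4, by omega⟩ ⟨k - 3, by omega⟩ j)
  x := fun j => P.x (Equiv.swap ⟨k - 4, by omega⟩ ⟨k - 3, by omega⟩ j)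

/-- The transformation `s_{n+3}`: `ε_{n+3} ↦ −ε_{n+3}`, `p_n ↦ p_n − ε_{n+3}/q_n`. -/
def sLast (P : GPt m) : GPt m where
  e := Function.update P.e ⟨m + 4, by omega⟩ (-(P.e ⟨m + 4, by omega⟩))
  q := P.q
  p := Function.update P.p (Fin.last (m + 1))
    (P.p (Fin.last (m + 1)) - P.e ⟨m + 4, by omega⟩ / P.q (Fin.last (m + 1)))
  x := P.x

/-- The family `s_k`, `k = 0, 1, …, n+3` (junk value `id` for `k > n+3`). -/
def s (k : ℕ) (P : GPt m) : GPt m :=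
  if k = 0 then P.s0
  else if k = 1 then P.s1
  else if k = 2 then P.s2
  else if k = 3 then P.s3
  else if h : 4 ≤ k ∧ k ≤ m + 4 then sMid k h P
  else if k = m + 5 then P.sLast
  else P

/-- The nonvanishing, at a given point, of all denominators occurring in `s_k`. -/
def Dfd (k : ℕ) (P : GPt m) : Prop :=
  if k = 0 then
    (∀ j, P.p j ≠ 0) ∧ P.Q1 ≠ 0 ∧ P.Q1 + P.e 2 ≠ 0 ∧ (∀ i, P.x i ≠ 0)
  else if k = 1 then ∀ i, P.x i ≠ 0
  else if k = 2 then P.Q2 ≠ 0 ∧ ∀ i, P.x i ≠ 1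
  else if k = 3 then P.q 0 ≠ 0 ∧ P.x 0 ≠ 0
  else if k = m + 5 then P.q (Fin.last (m + 1)) ≠ 0
  else True

/-- Apply `s_{k₁}, s_{k₂}, …` in succession. -/
def chain : List ℕ → GPt m → GPt m
  | [], P => P
  | k :: ks, P => chain ks (s k P)

/-- All denominators occurring in the successive application of
`s_{k₁}, s_{k₂}, …` are nonzero. -/
def chainDfd : List ℕ → GPt m → Prop
  | [], _ => True
  | k :: ks, P => Dfd k P ∧ chainDfd ks (s k P)

end GPt

open GPt

namespace GPt

variable {m : ℕ}

/-- Nonvanishing of all denominators occurring in `s₀`. -/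
def Dfd0 (P : GPt m) : Prop :=
  (∀ j, P.p j ≠ 0) ∧ P.Q1 ≠ 0 ∧ P.Q1 + P.e 2 ≠ 0 ∧ (∀ i, P.x i ≠ 0)

/-- Nonvanishing of all denominators occurring in `s₁`. -/
def Dfd1 (P : GPt m) : Prop := ∀ i, P.x i ≠ 0

/-- Nonvanishing of all denominators occurring in `s₂`. -/
def Dfd2 (P : GPt m) : Prop := P.Q2 ≠ 0 ∧ ∀ i, P.x i ≠ 1

/-- Nonvanishing of all denominators occurring in `s₃`. -/
def Dfd3 (P : GPt m) : Prop := P.q 0 ≠ 0 ∧ P.x 0 ≠ 0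

/-- Nonvanishing of all denominators occurring in `s_{n+3}`. -/
def DfdLast (P : GPt m) : Prop := P.q (Fin.last (m + 1)) ≠ 0

end GPt

namespace SHelpers
open GPt
variable {m : ℕ}


lemma e_s2 (P : GPt m) (j) : P.s2.e j = P.e (Equiv.swap 1 2 j) := rfl
lemma q_s2 (P : GPt m) (j) : P.s2.q j = P.q j / P.Q2 := rfl
lemma p_s2 (P : GPt m) (j) : P.s2.p j = (P.p j - P.Q1) * P.Q2 := rfl
lemma x_s2 (P : GPt m) (i) : P.s2.x i = P.x i / (P.x i - 1) := rfl
lemma e_s3 (P : GPt m) (j) : P.s3.e j = P.e (Equiv.swap 2 3 j) := rfl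
lemma q_s3z (P : GPt m) : P.s3.q 0 = 1 / P.q 0 := rfl
lemma q_s3n (P : GPt m) {j} (hj : j ≠ 0) : P.s3.q j = -P.q j / P.q 0 := by
  simp [s3, hj]
lemma p_s3z (P : GPt m) : P.s3.p 0 = -(P.q 0 * P.Q1) := rfl
lemma p_s3n (P : GPt m) {j} (hj : j ≠ 0) : P.s3.p j = -(P.q 0 * P.p j) := by
  simp [s3, hj]
lemma x_s3z (P : GPt m) : P.s3.x 0 = 1 / P.x 0 := rfl
lemma x_s3n (P : GPt m) {i} (hi : i ≠ 0) : P.s3.x i = P.x i / P.x 0 := by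
  simp [s3, hi]

lemma sum_q (P : GPt m) : ∑ j, P.q j = P.Q2 + 1 := by simp [Q2]

lemma Q1_s2 (P : GPt m) (hb : P.Q2 ≠ 0) : P.s2.Q1 = -(P.Q1 * P.Q2) := by
  have hsum : ∑ j, P.e (Equiv.swap 1 2 j) = ∑ j, P.e j := Equiv.sum_comp _ _
  have h : ∀ l : Fin (m+2), P.q l / P.Q2 * ((P.p l - P.Q1) * P.Q2)
      = P.q l * P.p l - P.Q1 * P.q l := by
    intro l; field_simp
  have h1 : P.s2.Q1 = (∑ l, P.q l / P.Q2 * ((P.p l - P.Q1) * P.Q2))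
      + (1 - ∑ j, P.e (Equiv.swap 1 2 j)) / 2 := rfl
  rw [h1, hsum, Finset.sum_congr rfl fun l _ => h l, Finset.sum_sub_distrib,
    ← Finset.mul_sum, sum_q]
  have h2 : ∑ l, P.q l * P.p l = P.Q1 - (1 - ∑ j, P.e j) / 2 := by simp [Q1]
  rw [h2]; ring

lemma Q2_s2 (P : GPt m) (hb : P.Q2 ≠ 0) : P.s2.Q2 = P.Q2⁻¹ := by
  have : P.s2.Q2 = (∑ j, P.q j) / P.Q2 - 1 := by
    simp only [Q2, s2, ← Finset.sum_div]
  rw [this, sum_q]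
  field_simp
  ring

lemma Q1_s3 (P : GPt m) (hq : P.q 0 ≠ 0) : P.s3.Q1 = -(P.q 0 * P.p 0) := by
  have hsum : ∑ j, P.e (Equiv.swap 2 3 j) = ∑ j, P.e j := Equiv.sum_comp _ _
  have h : ∀ i : Fin (m+1), -P.q i.succ / P.q 0 * -(P.q 0 * P.p i.succ)
      = P.q i.succ * P.p i.succ := by
    intro i; field_simp
  have h1 : P.s3.Q1 = (∑ l, P.s3.q l * P.s3.p l)
      + (1 - ∑ j, P.e (Equiv.swap 2 3 j)) / 2 := rfl
  rw [h1, hsum, Fin.sum_univ_succ, q_s3z, p_s3z,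
    Finset.sum_congr rfl fun i _ => by
      rw [q_s3n _ (Fin.succ_ne_zero i), p_s3n _ (Fin.succ_ne_zero i), h i]]
  have h2 : ∑ i : Fin (m+1), P.q i.succ * P.p i.succ
      = P.Q1 - (1 - ∑ j, P.e j) / 2 - P.q 0 * P.p 0 := by
    simp [Q1, Fin.sum_univ_succ]
  rw [h2]
  field_simp
  ring

lemma Q2_s3 (P : GPt m) (hq : P.q 0 ≠ 0) : P.s3.Q2 = -P.Q2 / P.q 0 := by
  have h1 : P.s3.Q2 = (∑ j, P.s3.q j) - 1 := rfl
  rw [h1, Fin.sum_univ_succ, q_s3z,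
    Finset.sum_congr rfl fun i _ => q_s3n _ (Fin.succ_ne_zero i)]
  have hs : ∑ i : Fin (m+1), P.q i.succ = P.Q2 + 1 - P.q 0 := by
    simp [Q2, Fin.sum_univ_succ]
  rw [← Finset.sum_div, Finset.sum_neg_distrib, hs]
  field_simp
  ring



lemma v1 : ((1 : Fin (m+5)) : ℕ) = 1 := by
  rw [Fin.coe_ofNat_eq_mod]; exact Nat.mod_eq_of_lt (by omega)
lemma v2 : ((2 : Fin (m+5)) : ℕ) = 2 := by
  rw [Fin.coe_ofNat_eq_mod]; exact Nat.mod_eq_of_lt (by omega)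
lemma v3 : ((3 : Fin (m+5)) : ℕ) = 3 := by
  rw [Fin.coe_ofNat_eq_mod]; exact Nat.mod_eq_of_lt (by omega)
lemma ne12 : (1 : Fin (m+5)) ≠ 2 := Fin.ne_of_val_ne (by rw [v1, v2]; omega)
lemma ne13 : (1 : Fin (m+5)) ≠ 3 := Fin.ne_of_val_ne (by rw [v1, v3]; omega)
lemma ne23 : (2 : Fin (m+5)) ≠ 3 := Fin.ne_of_val_ne (by rw [v2, v3]; omega)

lemma swap3 (j : Fin (m+5)) :
    Equiv.swap 1 2 (Equiv.swap 2 3 (Equiv.swap 1 2 (Equiv.swap 2 3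
      (Equiv.swap 1 2 (Equiv.swap 2 3 j))))) = j := by
  have n12 : (1 : Fin (m+5)) ≠ 2 := ne12
  have n13 : (1 : Fin (m+5)) ≠ 3 := ne13
  have n23 : (2 : Fin (m+5)) ≠ 3 := ne23
  rcases eq_or_ne j 1 with rfl | h1
  · simp [Equiv.swap_apply_def, n12, n13, n23, n12.symm, n13.symm, n23.symm]
  rcases eq_or_ne j 2 with rfl | h2
  · simp [Equiv.swap_apply_def, n12, n13, n23, n12.symm, n13.symm, n23.symm]
  rcases eq_or_ne j 3 with rfl | h3
  · simp [Equiv.swap_apply_def, n12, n13, n23, n12.symm, n13.symm, n23.symm]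
  · simp [Equiv.swap_apply_def, h1, h2, h3]

lemma div_div_same' (A B D : ℂ) (hD : D ≠ 0) : (A/D)/(B/D) = A/B := by
  rcases eq_or_ne B 0 with rfl | hB
  · simp
  · field_simp

lemma GPt_ext {P Q : GPt m} (he : ∀ j, P.e j = Q.e j) (hq : ∀ j, P.q j = Q.q j)
    (hp : ∀ j, P.p j = Q.p j) (hx : ∀ j, P.x j = Q.x j) : P = Q := by
  cases P; cases Q
  simp only [GPt.mk.injEq]
  exact ⟨funext he, funext hq, funext hp, funext hx⟩


end SHelpers

open SHelpers

/-- `(s₂ s₃)³ = id`: at every point where all denominators occurring in the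
sixfold composition are nonzero, applying `s₂, s₃` alternately three times each
returns the original point. -/
theorem s2_s3_order_three (m : ℕ) (P : GPt m)
    (h0 : Dfd2 P) (h1 : Dfd3 P.s2) (h2 : Dfd2 P.s2.s3)
    (h3 : Dfd3 P.s2.s3.s2) (h4 : Dfd2 P.s2.s3.s2.s3) (h5 : Dfd3 P.s2.s3.s2.s3.s2) :
    P.s2.s3.s2.s3.s2.s3 = P := by
  obtain ⟨hb, hx1⟩ := h0
  have hq0 : P.q 0 ≠ 0 := by
    have h := h1.1; rw [q_s2] at h; exact (div_ne_zero_iff.mp h).1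
  have hx0 : P.x 0 ≠ 0 := by
    have h := h1.2; rw [x_s2] at h; exact (div_ne_zero_iff.mp h).1
  have hx1' : ∀ i, P.x i - 1 ≠ 0 := fun i => sub_ne_zero.mpr (hx1 i)
  have h1x0 : (1:ℂ) - P.x 0 ≠ 0 := sub_ne_zero.mpr (Ne.symm (hx1 0))
  have hq01 : P.s2.q 0 ≠ 0 := h1.1
  have Q11 : P.s2.Q1 = -(P.Q1 * P.Q2) := Q1_s2 P hb
  have Q21 : P.s2.Q2 = P.Q2⁻¹ := Q2_s2 P hb
  have Q12 : P.s2.s3.Q1 = P.q 0 * (P.Q1 - P.p 0) := by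
    rw [Q1_s3 _ hq01, q_s2, p_s2]; field_simp; ring
  have Q22 : P.s2.s3.Q2 = -(P.q 0)⁻¹ := by
    rw [Q2_s3 _ hq01, Q21, q_s2]; field_simp
  have hb2 : P.s2.s3.Q2 ≠ 0 := h2.1
  have Q13 : P.s2.s3.s2.Q1 = P.Q1 - P.p 0 := by
    rw [Q1_s2 _ hb2, Q12, Q22]; field_simp
  have Q23 : P.s2.s3.s2.Q2 = -P.q 0 := by
    rw [Q2_s2 _ hb2, Q22, inv_neg, inv_inv]
  have q30 : P.s2.s3.s2.q 0 = -P.Q2 := by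
    rw [q_s2, q_s3z, q_s2, Q22]; field_simp
  have hq03 : P.s2.s3.s2.q 0 ≠ 0 := h3.1
  have p30 : P.s2.s3.s2.p 0 = -P.p 0 := by
    rw [p_s2, p_s3z, q_s2, Q11, Q12, Q22]; field_simp; ring
  have Q14 : P.s2.s3.s2.s3.Q1 = -(P.Q2 * P.p 0) := by
    rw [Q1_s3 _ hq03, q30, p30]; ring
  have Q24 : P.s2.s3.s2.s3.Q2 = -(P.q 0 / P.Q2) := by
    rw [Q2_s3 _ hq03, Q23, q30, neg_neg, div_neg]
  have hb4 : P.s2.s3.s2.s3.Q2 ≠ 0 := h4.1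
  have Q15 : P.s2.s3.s2.s3.s2.Q1 = -(P.q 0 * P.p 0) := by
    rw [Q1_s2 _ hb4, Q14, Q24]; field_simp
  have q50 : P.s2.s3.s2.s3.s2.q 0 = (P.q 0)⁻¹ := by
    rw [q_s2, q_s3z, q30, Q24]; field_simp
  have p50 : P.s2.s3.s2.s3.s2.p 0 = -(P.q 0 * P.Q1) := by
    rw [p_s2, p_s3z, q30, Q13, Q14, Q24]; field_simp; ring
  have hxne : ∀ i, i ≠ 0 → P.x 0 - P.x i ≠ 0 := by
    intro i hi heq
    have h := h2.2 i
    rw [x_s3n _ hi, x_s2, x_s2] at h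
    apply h
    have e : P.x i = P.x 0 := (sub_eq_zero.mp heq).symm
    rw [e]
    exact div_self (div_ne_zero hx0 (hx1' 0))
  -- x chain at 0
  have X2 : P.s2.s3.x 0 = (P.x 0 - 1) / P.x 0 := by
    rw [x_s3z, x_s2, one_div, inv_div]
  have X3 : P.s2.s3.s2.x 0 = 1 - P.x 0 := by
    have d : (P.x 0 - 1)/P.x 0 - 1 = (-1)/P.x 0 := by field_simp; ring
    rw [x_s2, X2, d, div_div_same' _ _ _ hx0]
    field_simp
    ring
  have X4 : P.s2.s3.s2.s3.x 0 = (1 - P.x 0)⁻¹ := by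
    rw [x_s3z, X3, one_div]
  have X5 : P.s2.s3.s2.s3.s2.x 0 = (P.x 0)⁻¹ := by
    rw [x_s2, X4]
    field_simp
    rw [sub_sub_cancel, div_self hx0]
  refine GPt_ext ?_ ?_ ?_ ?_
  · -- e component
    intro j
    rw [e_s3, e_s2, e_s3, e_s2, e_s3, e_s2]
    exact congrArg P.e (swap3 j)
  · -- q component
    intro j
    by_cases hj : j = 0
    · subst hj; rw [q_s3z, q50, one_div, inv_inv]
    · simp only [q_s3n _ hj, q_s2, q_s3z]
      rw [Q22, Q24]
      field_simp
  · -- p component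
    intro j
    by_cases hj : j = 0
    · subst hj; rw [p_s3z, q50, Q15]; field_simp
    · simp only [p_s3n _ hj, p_s2, q_s2, q_s3z]
      rw [Q12, Q14, Q22, Q24]
      field_simp
      ring
  · -- x component
    intro j
    by_cases hj : j = 0
    · subst hj; rw [x_s3z, X5, one_div, inv_inv]
    · have hj1 := hx1' j
      have h01 := hx1' 0
      have Y2 : P.s2.s3.x j = P.x j * (P.x 0 - 1) / ((P.x j - 1) * P.x 0) := by
        rw [x_s3n _ hj, x_s2, x_s2]
        field_simp
      have Y3 : P.s2.s3.s2.x j = P.x j * (P.x 0 - 1) / (P.x 0 - P.x j) := by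
        have d : P.x j * (P.x 0 - 1) / ((P.x j - 1) * P.x 0) - 1
            = (P.x 0 - P.x j)/((P.x j - 1) * P.x 0) := by
          field_simp; ring
        rw [x_s2, Y2, d, div_div_same' _ _ _ (mul_ne_zero (hx1' j) hx0)]
      have hd : P.x j - P.x 0 ≠ 0 :=
        fun h => hxne j hj (sub_eq_zero.mpr (sub_eq_zero.mp h).symm)
      have Y4 : P.s2.s3.s2.s3.x j = P.x j / (P.x j - P.x 0) := by
        rw [x_s3n _ hj, Y3, X3, div_div]
        rw [div_eq_div_iff (mul_ne_zero (hxne j hj) h1x0) hd]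
        ring
      have Y5 : P.s2.s3.s2.s3.s2.x j = P.x j / P.x 0 := by
        have d : P.x j/(P.x j - P.x 0) - 1 = P.x 0/(P.x j - P.x 0) := by
          field_simp
          ring
        rw [x_s2, Y4, d, div_div_same' _ _ _ hd]
      rw [x_s3n _ hj, Y5, X5]
      field_simp
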